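/- Let U, V be molecules with spherical boundary in regular directed complexes. Then their Gray product U ⊗ V has spherical boundary; in particular, for all k < dim U + dim V, ∂ₖ^+(U ⊗ V) ∩ ∂ₖ^−(U ⊗ V) = ∂ₖ₋₁(U ⊗ V). -/

import Mathlib

/-- An oriented graded poset: a finite graded poset together with an
orientation (edge-labelling of the Hasse diagram in `Bool`, `true` = `+`,
`false` = `-`).  `orient y x` is the label of the edge `y → x` when `x ⋖ y`. -/
structure OGP where
  carrier : Type
  [po : PartialOrder carrier]
  [fin : Finite carrier]
  dim : carrier → ℕ
  graded : ∀ x y : carrier, x ⋖ y → dim y = dim x + 1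
  min_dim : ∀ x : carrier, IsMin x → dim x = 0
  orient : carrier → carrier → Bool

attribute [instance] OGP.po OGP.fin

namespace OGP

variable (P : OGP)

/-- Downward closure of a subset. -/
def cl (U : Set P.carrier) : Set P.carrier := {x | ∃ y ∈ U, x ≤ y}

/-- A subset is closed if it is downward closed. -/
def IsClosed (U : Set P.carrier) : Prop := P.cl U ⊆ U

/-- `Δₙ^α U`: the `n`-dimensional elements of `U` all of whose covering
elements in `U` cover with sign `α`. -/
def sb (n : ℕ) (α : Bool) (U : Set P.carrier) : Set P.carrier :=
  {x | x ∈ U ∧ P.dim x = n ∧ ∀ y ∈ U, x ⋖ y → P.orient y x = α}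

/-- The boundary `∂ₙ^α U`. -/
def bd (n : ℕ) (α : Bool) (U : Set P.carrier) : Set P.carrier :=
  P.cl (P.sb n α U) ∪ {x | x ∈ U ∧ ∀ y ∈ U, x ≤ y → P.dim y ≤ n}

/-- Dimension of a subset (the maximum of the dimensions of its elements;
`0` if empty). -/
noncomputable def sdim (U : Set P.carrier) : ℕ := sSup (P.dim '' U)

end OGP

/-- A map of oriented graded posets: a function commuting with all boundary
operators `∂ₙ^α` on closures of points. -/
def IsMap (P Q : OGP) (f : P.carrier → Q.carrier) : Prop :=
  ∀ (x : P.carrier) (n : ℕ) (α : Bool),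
    Q.bd n α (Q.cl {f x}) = f '' (P.bd n α (P.cl {x}))

/-- Molecules in an oriented graded poset, defined inductively: atoms
(closed subsets with a greatest element), and pastings `U₁ ∪ U₂` of two
molecules properly contained in the union with
`U₁ ∩ U₂ = ∂ₖ^+ U₁ = ∂ₖ^- U₂`. -/
inductive IsMolecule (P : OGP) : Set P.carrier → Prop
  | atom : ∀ U : Set P.carrier, P.IsClosed U → (∃ x ∈ U, ∀ y ∈ U, y ≤ x) →
      IsMolecule P U
  | paste : ∀ (U₁ U₂ : Set P.carrier) (k : ℕ),
      IsMolecule P U₁ → IsMolecule P U₂ →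
      U₁ ∩ U₂ = P.bd k true U₁ → U₁ ∩ U₂ = P.bd k false U₂ →
      U₁ ≠ U₁ ∪ U₂ → U₂ ≠ U₁ ∪ U₂ →
      IsMolecule P (U₁ ∪ U₂)

/-- `∂^α x`: the boundary of the closure of a single element. -/
def OGP.bdx (P : OGP) (α : Bool) (x : P.carrier) : Set P.carrier :=
  P.bd (P.dim x - 1) α (P.cl {x})

/-- A directed complex: every `∂^α x` is a molecule, and globularity holds. -/
def IsDirectedComplex (P : OGP) : Prop :=
  ∀ (x : P.carrier) (α : Bool),
    IsMolecule P (P.bdx α x) ∧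
    (1 < P.dim x → ∀ β : Bool,
      P.bd (P.dim x - 2) α (P.bdx β x) = P.bd (P.dim x - 2) α (P.cl {x}))

/-- An `n`-molecule `U` has spherical boundary iff for all `k < n`,
`∂ₖ^+ U ∩ ∂ₖ^- U = ∂ₖ₋₁ U` (for `k = 0` the right-hand side is empty). -/
def HasSphericalBoundary (P : OGP) (n : ℕ) (U : Set P.carrier) : Prop :=
  (∀ k : ℕ, 0 < k → k < n →
      P.bd k true U ∩ P.bd k false U = P.bd (k - 1) true U ∪ P.bd (k - 1) false U) ∧
  (0 < n → P.bd 0 true U ∩ P.bd 0 false U = ∅)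

/-- A regular directed complex: a directed complex all of whose atoms have
spherical boundary. -/
def IsRegularDC (P : OGP) : Prop :=
  IsDirectedComplex P ∧ ∀ x : P.carrier, HasSphericalBoundary P (P.dim x) (P.cl {x})

open Classical in
/-- The Gray product of oriented graded posets. -/
noncomputable def gray (P Q : OGP) : OGP where
  carrier := P.carrier × Q.carrier
  po := inferInstance
  fin := inferInstance
  dim := fun z => P.dim z.1 + Q.dim z.2
  graded := by
    rintro x y h
    rcases Prod.covBy_iff.mp h with ⟨h1, h2⟩ | ⟨h1, h2⟩
    · show P.dim y.1 + Q.dim y.2 = P.dim x.1 + Q.dim x.2 + 1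
      rw [P.graded _ _ h1, ← h2]; ring
    · show P.dim y.1 + Q.dim y.2 = P.dim x.1 + Q.dim x.2 + 1
      rw [Q.graded _ _ h1, ← h2]; ring
  min_dim := by
    intro x hx
    rcases Prod.isMin_iff.mp hx with ⟨h1, h2⟩
    show P.dim x.1 + Q.dim x.2 = 0
    rw [P.min_dim _ h1, Q.min_dim _ h2]
  orient := fun y x =>
    if y.2 = x.2 then P.orient y.1 x.1
    else if P.dim y.1 % 2 = 0 then Q.orient y.2 x.2 else ! Q.orient y.2 x.2

-- ===================== Auxiliary material =====================

namespace OGP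

variable {P : OGP}

/-- The second component of the boundary. -/
def Mp (P : OGP) (k : ℕ) (U : Set P.carrier) : Set P.carrier :=
  {x | x ∈ U ∧ ∀ y ∈ U, x ≤ y → P.dim y ≤ k}

lemma bd_eq (k : ℕ) (α : Bool) (U : Set P.carrier) :
    P.bd k α U = P.cl (P.sb k α U) ∪ P.Mp k U := rfl

lemma subset_cl (U : Set P.carrier) : U ⊆ P.cl U := fun x hx => ⟨x, hx, le_rfl⟩

lemma cl_subset {U V : Set P.carrier} (hV : P.IsClosed V) (h : U ⊆ V) : P.cl U ⊆ V := by
  rintro x ⟨y, hy, hxy⟩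
  exact hV ⟨y, h hy, hxy⟩

lemma sb_subset (n : ℕ) (α : Bool) (U : Set P.carrier) : P.sb n α U ⊆ U := fun _ hx => hx.1

lemma bd_subset {U : Set P.carrier} (hU : P.IsClosed U) (k : ℕ) (α : Bool) :
    P.bd k α U ⊆ U := by
  rintro x (hx | hx)
  · exact cl_subset hU (P.sb_subset k α U) hx
  · exact hx.1

lemma dim_lt_of_lt : ∀ y : P.carrier, ∀ x, x < y → P.dim x < P.dim y := by
  have wf : WellFoundedLT P.carrier := Finite.to_wellFoundedLT
  intro y
  refine wf.wf.induction (C := fun y => ∀ x, x < y → P.dim x < P.dim y) y ?_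
  intro y IH x hxy
  obtain ⟨z, hz, hmax⟩ := Set.Finite.exists_maximalFor id {z : P.carrier | x ≤ z ∧ z < y}
    (Set.toFinite _) ⟨x, le_rfl, hxy⟩
  have hcov : z ⋖ y := by
    refine ⟨hz.2, fun c hc1 hc2 => ?_⟩
    have : z = c := le_antisymm hc1.le (hmax ⟨hz.1.trans hc1.le, hc2⟩ hc1.le)
    exact absurd this hc1.ne
  have hdy : P.dim y = P.dim z + 1 := P.graded z y hcov
  rcases eq_or_lt_of_le hz.1 with rfl | hlt
  · omega
  · have := IH z hz.2 x hlt
    omega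

/-- Above any element of a set, there is a dimension-maximizing element,
which is moreover order-maximal in the set. -/
lemma exists_dim_max {U : Set P.carrier} {x : P.carrier} (hx : x ∈ U) :
    ∃ z ∈ U, x ≤ z ∧ (∀ y ∈ U, x ≤ y → P.dim y ≤ P.dim z) ∧ (∀ y ∈ U, ¬z < y) := by
  obtain ⟨z, hz, hmax⟩ := Set.Finite.exists_maximalFor P.dim {z : P.carrier | x ≤ z ∧ z ∈ U}
    (Set.toFinite _) ⟨x, le_rfl, hx⟩
  have hdmax : ∀ y ∈ U, x ≤ y → P.dim y ≤ P.dim z := by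
    intro y hy hxy
    by_contra h
    push_neg at h
    exact absurd (hmax ⟨hxy, hy⟩ h.le) (not_le.mpr h)
  refine ⟨z, hz.2, hz.1, hdmax, fun y hy hlt => ?_⟩
  have h1 := dim_lt_of_lt y z hlt
  have h2 := hdmax y hy (hz.1.trans hlt.le)
  omega

lemma bd_of_ge {U : Set P.carrier} {n : ℕ} (hU : P.IsClosed U) (hd : ∀ x ∈ U, P.dim x ≤ n)
    {k : ℕ} (h : n ≤ k) (α : Bool) : P.bd k α U = U := by
  refine subset_antisymm (bd_subset hU k α) fun x hx => ?_
  exact Or.inr ⟨hx, fun y hy _ => (hd y hy).trans h⟩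

lemma bd_succ_subset {U : Set P.carrier} {n : ℕ} (hU : P.IsClosed U)
    (hd : ∀ x ∈ U, P.dim x ≤ n) (hs : HasSphericalBoundary P n U)
    (i : ℕ) (α β : Bool) : P.bd i α U ⊆ P.bd (i + 1) β U := by
  by_cases h : i + 1 < n
  · have heq := hs.1 (i + 1) (Nat.succ_pos i) h
    simp only [Nat.add_sub_cancel] at heq
    intro x hx
    have hx2 : x ∈ P.bd (i + 1) true U ∩ P.bd (i + 1) false U := by
      rw [heq]
      cases α
      · exact Or.inr hx
      · exact Or.inl hx
    cases β
    · exact hx2.2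
    · exact hx2.1
  · rw [bd_of_ge hU hd (by omega) β]
    exact bd_subset hU i α

lemma bd_mono {U : Set P.carrier} {n : ℕ} (hU : P.IsClosed U)
    (hd : ∀ x ∈ U, P.dim x ≤ n) (hs : HasSphericalBoundary P n U)
    {i j : ℕ} (h : i < j) (α β : Bool) : P.bd i α U ⊆ P.bd j β U := by
  induction j with
  | zero => omega
  | succ j IH =>
    rcases Nat.lt_succ_iff_lt_or_eq.mp h with h' | rfl
    · exact (IH h').trans (bd_succ_subset hU hd hs j β β)
    · exact bd_succ_subset hU hd hs i α β

end OGP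

lemma molecule_closed {P : OGP} {U : Set P.carrier} (h : IsMolecule P U) : P.IsClosed U := by
  induction h with
  | atom U hU _ => exact hU
  | paste U₁ U₂ k _ _ _ _ _ _ IH1 IH2 =>
    rintro x ⟨y, hy, hxy⟩
    rcases hy with hy | hy
    · exact Or.inl (IH1 ⟨y, hy, hxy⟩)
    · exact Or.inr (IH2 ⟨y, hy, hxy⟩)

/-- The sign twist `(-1)^i ⬝ α`. -/
def fsgn (i : ℕ) (α : Bool) : Bool := if i % 2 = 0 then α else !α

lemma fsgn_fsgn (i : ℕ) (α : Bool) : fsgn i (fsgn i α) = α := by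
  unfold fsgn; split <;> simp

lemma fsgn_not (i : ℕ) (α : Bool) : fsgn i (!α) = !(fsgn i α) := by
  unfold fsgn; split <;> simp

lemma fsgn_succ (i : ℕ) (α : Bool) : fsgn (i + 1) α = !(fsgn i α) := by
  unfold fsgn
  rcases Nat.mod_two_eq_zero_or_one i with h | h <;> simp [h, Nat.add_mod]

lemma fsgn_zero (α : Bool) : fsgn 0 α = α := rfl

lemma fsgn_succ_false (i : ℕ) : fsgn (i + 1) false = fsgn i true := by
  unfold fsgn
  rcases Nat.mod_two_eq_zero_or_one i with h | h <;> simp [h, Nat.add_mod]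

lemma fsgn_succ_true (i : ℕ) : fsgn (i + 1) true = fsgn i false := by
  unfold fsgn
  rcases Nat.mod_two_eq_zero_or_one i with h | h <;> simp [h, Nat.add_mod]

section GrayLemmas

variable {P Q : OGP}

lemma gray_dim (z : P.carrier × Q.carrier) : (gray P Q).dim z = P.dim z.1 + Q.dim z.2 := rfl

lemma gray_le {z w : P.carrier × Q.carrier} :
    (@LE.le (gray P Q).carrier _ z w) ↔ z.1 ≤ w.1 ∧ z.2 ≤ w.2 := Iff.rfl

lemma gray_covBy {z w : P.carrier × Q.carrier} :
    (@CovBy (gray P Q).carrier _ z w) ↔ (z.1 ⋖ w.1 ∧ z.2 = w.2) ∨ (z.1 = w.1 ∧ z.2 ⋖ w.2) := by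
  constructor
  · intro h
    rcases Prod.covBy_iff.mp h with ⟨h1, h2⟩ | ⟨h1, h2⟩
    exacts [Or.inl ⟨h1, h2⟩, Or.inr ⟨h2, h1⟩]
  · rintro (⟨h1, h2⟩ | ⟨h1, h2⟩)
    · exact Prod.covBy_iff.mpr (Or.inl ⟨h1, h2⟩)
    · exact Prod.covBy_iff.mpr (Or.inr ⟨h2, h1⟩)

lemma gray_orient_left {z w : P.carrier × Q.carrier} (h : w.2 = z.2) :
    (gray P Q).orient w z = P.orient w.1 z.1 := by
  simp only [gray]
  rw [if_pos h]

lemma gray_orient_right {z w : P.carrier × Q.carrier} (h : w.2 ≠ z.2) :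
    (gray P Q).orient w z = fsgn (P.dim w.1) (Q.orient w.2 z.2) := by
  simp only [gray]
  rw [if_neg h]
  rfl

lemma gray_sb_mem {U : Set P.carrier} {V : Set Q.carrier} {k : ℕ} {α : Bool}
    {z : P.carrier × Q.carrier} :
    z ∈ (gray P Q).sb k α (U ×ˢ V) ↔
      z.1 ∈ P.sb (P.dim z.1) α U ∧ z.2 ∈ Q.sb (Q.dim z.2) (fsgn (P.dim z.1) α) V ∧
        P.dim z.1 + Q.dim z.2 = k := by
  constructor
  · rintro ⟨hzUV, hdim, hcov⟩
    have hz1 : z.1 ∈ U := hzUV.1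
    have hz2 : z.2 ∈ V := hzUV.2
    refine ⟨⟨hz1, rfl, fun y hy hc => ?_⟩, ⟨hz2, rfl, fun y hy hc => ?_⟩, hdim⟩
    · have hcv : @CovBy (gray P Q).carrier _ z (y, z.2) := gray_covBy.mpr (Or.inl ⟨hc, rfl⟩)
      have h2 := hcov (y, z.2) ⟨hy, hz2⟩ hcv
      rwa [gray_orient_left (w := (y, z.2)) (z := z) rfl] at h2
    · have hcv : @CovBy (gray P Q).carrier _ z (z.1, y) := gray_covBy.mpr (Or.inr ⟨rfl, hc⟩)
      have h2 := hcov (z.1, y) ⟨hz1, hy⟩ hcv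
      rw [gray_orient_right hc.lt.ne'] at h2
      rw [← h2, fsgn_fsgn]
  · rintro ⟨⟨hz1, -, hcov1⟩, ⟨hz2, -, hcov2⟩, hdim⟩
    refine ⟨⟨hz1, hz2⟩, hdim, ?_⟩
    intro w hw hcv
    rcases gray_covBy.mp hcv with ⟨hc, he⟩ | ⟨he, hc⟩
    · rw [gray_orient_left he.symm]
      exact hcov1 w.1 hw.1 hc
    · rw [gray_orient_right hc.lt.ne', ← he, hcov2 w.2 hw.2 hc, fsgn_fsgn]

lemma gray_Mp_mem {U : Set P.carrier} {V : Set Q.carrier} {k : ℕ}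
    {z : P.carrier × Q.carrier} :
    z ∈ (gray P Q).Mp k (U ×ˢ V) ↔
      ∃ i j, i + j = k ∧ z.1 ∈ P.Mp i U ∧ z.2 ∈ Q.Mp j V := by
  constructor
  · rintro ⟨⟨hz1, hz2⟩, hbound⟩
    obtain ⟨a, haU, hza, hamax, -⟩ := OGP.exists_dim_max hz1
    obtain ⟨b, hbV, hzb, hbmax, -⟩ := OGP.exists_dim_max hz2
    have hab : P.dim a + Q.dim b ≤ k := hbound (a, b) ⟨haU, hbV⟩ (gray_le.mpr ⟨hza, hzb⟩)
    exact ⟨P.dim a, k - P.dim a, by omega, ⟨hz1, hamax⟩,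
      ⟨hz2, fun y hy hxy => le_trans (hbmax y hy hxy) (by omega)⟩⟩
  · rintro ⟨i, j, rfl, ⟨hz1, h1⟩, ⟨hz2, h2⟩⟩
    refine ⟨⟨hz1, hz2⟩, ?_⟩
    rintro ⟨y1, y2⟩ ⟨hy1, hy2⟩ hle
    have h := gray_le.mp hle
    exact Nat.add_le_add (h1 y1 hy1 h.1) (h2 y2 hy2 h.2)

/-- The Gray product formula for boundaries of products. -/
lemma gray_bd {U : Set P.carrier} {V : Set Q.carrier} {n m : ℕ}
    (hUc : P.IsClosed U) (hVc : Q.IsClosed V)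
    (hUd : ∀ x ∈ U, P.dim x ≤ n) (hVd : ∀ y ∈ V, Q.dim y ≤ m)
    (hsU : HasSphericalBoundary P n U) (hsV : HasSphericalBoundary Q m V)
    (k : ℕ) (α : Bool) :
    (gray P Q).bd k α (U ×ˢ V) =
      {z : P.carrier × Q.carrier |
        ∃ i j, i + j = k ∧ z.1 ∈ P.bd i α U ∧ z.2 ∈ Q.bd j (fsgn i α) V} := by
  ext z
  constructor
  · rintro (⟨w, hw, hzw⟩ | hz)
    · obtain ⟨hw1, hw2, hdim⟩ := gray_sb_mem.mp hw
      obtain ⟨hz1, hz2⟩ := gray_le.mp hzw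
      exact ⟨P.dim w.1, Q.dim w.2, hdim, Or.inl ⟨w.1, hw1, hz1⟩, Or.inl ⟨w.2, hw2, hz2⟩⟩
    · obtain ⟨i, j, hij, h1, h2⟩ := gray_Mp_mem.mp hz
      exact ⟨i, j, hij, Or.inr h1, Or.inr h2⟩
  · rintro ⟨i, j, hij, h1, h2⟩
    rcases h1 with h1 | h1
    · rcases h2 with h2 | h2
      · -- both in closures of `sb`
        obtain ⟨w1, hw1, hzw1⟩ := h1
        obtain ⟨w2, hw2, hzw2⟩ := h2
        refine Or.inl ⟨(w1, w2), gray_sb_mem.mpr ?_, gray_le.mpr ⟨hzw1, hzw2⟩⟩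
        obtain ⟨hw1U, hd1, hc1⟩ := hw1
        obtain ⟨hw2V, hd2, hc2⟩ := hw2
        subst hd1
        subst hd2
        exact ⟨⟨hw1U, rfl, hc1⟩, ⟨hw2V, rfl, hc2⟩, hij⟩
      · -- cross term 1 : closure of sb × Mp
        obtain ⟨hz2V, hz2b⟩ := h2
        obtain ⟨b, hbV, hzb, hbmax, hbmaxl⟩ := OGP.exists_dim_max hz2V
        have hdj : Q.dim b ≤ j := hz2b b hbV hzb
        have hz1' : z.1 ∈ P.bd (k - Q.dim b) α U := by
          rcases lt_or_eq_of_le (show i ≤ k - Q.dim b by omega) with h | h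
          · exact OGP.bd_mono hUc hUd hsU h α α (Or.inl h1)
          · rw [← h]; exact Or.inl h1
        rcases hz1' with ⟨x0, hx0, hzx0⟩ | hz1'
        · refine Or.inl ⟨(x0, b), gray_sb_mem.mpr ?_, gray_le.mpr ⟨hzx0, hzb⟩⟩
          obtain ⟨hx0U, hdx0, hcx0⟩ := hx0
          exact ⟨⟨hx0U, rfl, hcx0⟩,
            ⟨hbV, rfl, fun y hy hc => absurd hc.lt (hbmaxl y hy)⟩,
            show P.dim x0 + Q.dim b = k by omega⟩
        · exact Or.inr (gray_Mp_mem.mpr ⟨k - Q.dim b, Q.dim b, by omega, hz1',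
            ⟨hz2V, hbmax⟩⟩)
    · rcases h2 with h2 | h2
      · -- cross term 2 : Mp × closure of sb
        obtain ⟨hz1U, hz1b⟩ := h1
        obtain ⟨a, haU, hza, hamax, hamaxl⟩ := OGP.exists_dim_max hz1U
        have hdi : P.dim a ≤ i := hz1b a haU hza
        have hz2' : z.2 ∈ Q.bd (k - P.dim a) (fsgn (P.dim a) α) V := by
          rcases lt_or_eq_of_le (show j ≤ k - P.dim a by omega) with h | h
          · exact OGP.bd_mono hVc hVd hsV h _ _ (Or.inl h2)
          · have hda : P.dim a = i := by omega
            rw [← h, hda]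
            exact Or.inl h2
        rcases hz2' with ⟨y0, hy0, hzy0⟩ | hz2'
        · refine Or.inl ⟨(a, y0), gray_sb_mem.mpr ?_, gray_le.mpr ⟨hza, hzy0⟩⟩
          obtain ⟨hy0V, hdy0, hcy0⟩ := hy0
          exact ⟨⟨haU, rfl, fun y hy hc => absurd hc.lt (hamaxl y hy)⟩,
            ⟨hy0V, rfl, hcy0⟩, show P.dim a + Q.dim y0 = k by omega⟩
        · exact Or.inr (gray_Mp_mem.mpr ⟨P.dim a, k - P.dim a, by omega,
            ⟨hz1U, hamax⟩, hz2'⟩)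
      · exact Or.inr (gray_Mp_mem.mpr ⟨i, j, hij, h1, h2⟩)

end GrayLemmas


/-- the Gray product of molecules with spherical boundary has
spherical boundary. -/
theorem stmt13 (P Q : OGP) (hP : IsRegularDC P) (hQ : IsRegularDC Q)
    (U : Set P.carrier) (V : Set Q.carrier) (n m : ℕ)
    (hU : IsMolecule P U) (hV : IsMolecule Q V)
    (hUd : ∀ x ∈ U, P.dim x ≤ n) (hUe : ∃ x ∈ U, P.dim x = n)
    (hVd : ∀ y ∈ V, Q.dim y ≤ m) (hVe : ∃ y ∈ V, Q.dim y = m)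
    (hsU : HasSphericalBoundary P n U) (hsV : HasSphericalBoundary Q m V) :
    HasSphericalBoundary (gray P Q) (n + m) (U ×ˢ V) := by
  have hUc := molecule_closed hU
  have hVc := molecule_closed hV
  have GB := gray_bd hUc hVc hUd hVd hsU hsV
  constructor
  · intro k hk0 hkn
    obtain ⟨k', rfl⟩ : ∃ k', k = k' + 1 := ⟨k - 1, by omega⟩
    simp only [Nat.add_sub_cancel]
    rw [GB (k' + 1) true, GB (k' + 1) false, GB k' true, GB k' false]
    ext z
    simp only [Set.mem_inter_iff, Set.mem_union, Set.mem_setOf_eq, gray]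
    constructor
    · rintro ⟨⟨i, j, hij, h1t, h2t⟩, ⟨i', j', hij', h1f, h2f⟩⟩
      rcases Nat.lt_trichotomy i i' with hii | rfl | hii
      · -- i < i'
        obtain ⟨j₁, rfl⟩ : ∃ j₁, j = j₁ + 1 := ⟨j - 1, by omega⟩
        refine Or.inl ⟨i, j₁, by omega, h1t, ?_⟩
        rcases eq_or_lt_of_le (Nat.succ_le_of_lt hii) with hii' | hii'
        · obtain rfl : i' = i + 1 := hii'.symm
          obtain rfl : j' = j₁ := by omega
          rwa [fsgn_succ_false] at h2f
        · exact OGP.bd_mono hVc hVd hsV (by omega) _ _ h2f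
      · -- i = i'
        have hjj : j' = j := by omega
        rw [hjj] at h2f
        have h2both : z.2 ∈ Q.bd j true V ∧ z.2 ∈ Q.bd j false V := by
          have hns : fsgn i false = !(fsgn i true) := by
            rw [show (false = !true) from rfl, fsgn_not]
          rw [hns] at h2f
          cases hfs : fsgn i true
          · rw [hfs] at h2t h2f
            simp only [Bool.not_false] at h2f
            exact ⟨h2f, h2t⟩
          · rw [hfs] at h2t h2f
            simp only [Bool.not_true] at h2f
            exact ⟨h2t, h2f⟩
        have pick : ∀ γ : Bool, z.2 ∈ Q.bd j γ V := by
          intro γ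
          cases γ
          · exact h2both.2
          · exact h2both.1
        by_cases hni : n ≤ i
        · -- i ≥ n : the U-side boundary is all of U
          have hz1U : z.1 ∈ U := OGP.bd_subset hUc _ _ h1t
          have hjm : j < m := by omega
          rcases Nat.eq_zero_or_pos j with rfl | hj0
          · have hemp := hsV.2 (by omega)
            have : z.2 ∈ (∅ : Set Q.carrier) := hemp ▸ Set.mem_inter h2both.1 h2both.2
            exact this.elim
          · obtain ⟨j₁, rfl⟩ : ∃ j₁, j = j₁ + 1 := ⟨j - 1, by omega⟩
            have heq := hsV.1 (j₁ + 1) (by omega) hjm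
            simp only [Nat.add_sub_cancel] at heq
            have h2' : z.2 ∈ Q.bd j₁ true V ∪ Q.bd j₁ false V :=
              heq ▸ Set.mem_inter h2both.1 h2both.2
            have key : ∀ δ : Bool, z.2 ∈ Q.bd j₁ δ V →
                (∃ a b, a + b = k' ∧ z.1 ∈ P.bd a true U ∧ z.2 ∈ Q.bd b (fsgn a true) V) ∨
                (∃ a b, a + b = k' ∧ z.1 ∈ P.bd a false U ∧ z.2 ∈ Q.bd b (fsgn a false) V) := by
              intro δ hδ
              cases hb : fsgn i δ
              · refine Or.inr ⟨i, j₁, by omega, ?_, ?_⟩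
                · rw [OGP.bd_of_ge hUc hUd hni]
                  exact hz1U
                · have he : fsgn i false = δ := by rw [← hb, fsgn_fsgn]
                  rw [he]
                  exact hδ
              · refine Or.inl ⟨i, j₁, by omega, ?_, ?_⟩
                · rw [OGP.bd_of_ge hUc hUd hni]
                  exact hz1U
                · have he : fsgn i true = δ := by rw [← hb, fsgn_fsgn]
                  rw [he]
                  exact hδ
            rcases h2' with hδ | hδ
            · exact key true hδ
            · exact key false hδ
        · -- i < n
          push_neg at hni
          rcases Nat.eq_zero_or_pos i with rfl | hi0
          · have hemp := hsU.2 (by omega)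
            have : z.1 ∈ (∅ : Set P.carrier) := hemp ▸ Set.mem_inter h1t h1f
            exact this.elim
          · obtain ⟨i₁, rfl⟩ : ∃ i₁, i = i₁ + 1 := ⟨i - 1, by omega⟩
            have heqU := hsU.1 (i₁ + 1) (by omega) hni
            simp only [Nat.add_sub_cancel] at heqU
            have h1' : z.1 ∈ P.bd i₁ true U ∪ P.bd i₁ false U :=
              heqU ▸ Set.mem_inter h1t h1f
            rcases h1' with hδ | hδ
            · exact Or.inl ⟨i₁, j, by omega, hδ, pick _⟩
            · exact Or.inr ⟨i₁, j, by omega, hδ, pick _⟩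
      · -- i' < i
        obtain ⟨j₁, rfl⟩ : ∃ j₁, j' = j₁ + 1 := ⟨j' - 1, by omega⟩
        refine Or.inr ⟨i', j₁, by omega, h1f, ?_⟩
        rcases eq_or_lt_of_le (Nat.succ_le_of_lt hii) with hii' | hii'
        · obtain rfl : i = i' + 1 := hii'.symm
          obtain rfl : j = j₁ := by omega
          rwa [fsgn_succ_true] at h2t
        · exact OGP.bd_mono hVc hVd hsV (by omega) _ _ h2t
    · have up : ∀ α β : Bool,
          (∃ i j, i + j = k' ∧ z.1 ∈ P.bd i β U ∧ z.2 ∈ Q.bd j (fsgn i β) V) →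
          ∃ i j, i + j = k' + 1 ∧ z.1 ∈ P.bd i α U ∧ z.2 ∈ Q.bd j (fsgn i α) V := by
        rintro α β ⟨i, j, hij, h1, h2⟩
        by_cases hab : β = α
        · subst hab
          exact ⟨i, j + 1, by omega, h1,
            OGP.bd_mono hVc hVd hsV (Nat.lt_succ_self j) _ _ h2⟩
        · have hb : β = !α := by cases α <;> cases β <;> simp_all
          subst hb
          refine ⟨i + 1, j, by omega,
            OGP.bd_mono hUc hUd hsU (Nat.lt_succ_self i) _ _ h1, ?_⟩
          rw [fsgn_succ, ← fsgn_not]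
          exact h2
      rintro (h | h)
      · exact ⟨up true true h, up false true h⟩
      · exact ⟨up true false h, up false false h⟩
  · intro hnm
    rw [GB 0 true, GB 0 false]
    ext z
    simp only [Set.mem_inter_iff, Set.mem_setOf_eq, Set.mem_empty_iff_false, iff_false]
    rintro ⟨⟨i, j, hij, h1t, h2t⟩, ⟨i', j', hij', h1f, h2f⟩⟩
    obtain rfl : i = 0 := by omega
    obtain rfl : j = 0 := by omega
    obtain rfl : i' = 0 := by omega
    obtain rfl : j' = 0 := by omega
    rw [fsgn_zero] at h2t h2f
    rcases Nat.eq_zero_or_pos n with rfl | hn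
    · have hemp := hsV.2 (by omega)
      have : z.2 ∈ (∅ : Set Q.carrier) := hemp ▸ Set.mem_inter h2t h2f
      exact this.elim
    · have hemp := hsU.2 hn
      have : z.1 ∈ (∅ : Set P.carrier) := hemp ▸ Set.mem_inter h1t h1f
      exact this.elim
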